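/- Let λ ∈ ℤⁿ be a regular anti-dominant integral weight. If λ_n > n+1, then the only dominant weight ω in the dot-orbit O_λ satisfying the unitarizability inequality ω_n ≥ n − p(ω) − q(ω)/2 is λ itself. If λ_n = n+1, then the set of such weights is exactly {λ^{(0)}, λ^{(1)}, …, λ^{(p(λ))}}, where λ^{(j)} = (λ_1, …, λ_{n−j}, n−j, …, n−j) (the last j entries all equal to n−j) and p(λ) = #{i : λ_i = λ_n}. -/

import Mathlib

/-- The action of a signed permutation on an integer vector. -/
def signedPermAct {n : ℕ} (σ : Equiv.Perm (Fin n)) (ε : Fin n → ℤˣ)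
    (v : Fin n → ℤ) : Fin n → ℤ :=
  fun i => (ε i : ℤ) * v (σ.symm i)

/-- `ρ = (−1, −2, …, −n)`. -/
def rhoC (n : ℕ) : Fin n → ℤ := fun i => -((i : ℤ) + 1)

/-- The dot action `w·λ = w(λ+ρ) − ρ`. -/
def dotAct {n : ℕ} (σ : Equiv.Perm (Fin n)) (ε : Fin n → ℤˣ)
    (lam : Fin n → ℤ) : Fin n → ℤ :=
  fun i => signedPermAct σ ε (fun j => lam j + rhoC n j) i - rhoC n i

/-- `p(ω) = #{i : ωᵢ = ωₙ}`. -/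
def pCount {n : ℕ} (hn : 0 < n) (ω : Fin n → ℤ) : ℕ :=
  (Finset.univ.filter fun i : Fin n => ω i = ω ⟨n - 1, Nat.sub_lt hn one_pos⟩).card

/-- `q(ω) = #{i : ωᵢ = ωₙ + 1}`. -/
def qCount {n : ℕ} (hn : 0 < n) (ω : Fin n → ℤ) : ℕ :=
  (Finset.univ.filter fun i : Fin n => ω i = ω ⟨n - 1, Nat.sub_lt hn one_pos⟩ + 1).card

/-- `λ^{(j)} = (λ_1, …, λ_{n−j}, n−j, …, n−j)` (the last `j` entries equal to `n−j`). -/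
def lamTrunc {n : ℕ} (lam : Fin n → ℤ) (j : ℕ) : Fin n → ℤ :=
  fun i => if (i : ℕ) < n - j then lam i else (n : ℤ) - (j : ℤ)

/-! ### Auxiliary lemmas -/


/-- The `ρ`-shift of a weight. -/
def shiftW {n : ℕ} (f : Fin n → ℤ) : Fin n → ℤ := fun i => f i - ((i : ℤ) + 1)

lemma shiftW_apply {n : ℕ} (f : Fin n → ℤ) (i : Fin n) :
    shiftW f i = f i - ((i : ℤ) + 1) := rfl

lemma upclosed_mem_iff {n : ℕ} (S : Finset (Fin n))
    (h : ∀ i j : Fin n, i ≤ j → i ∈ S → j ∈ S) (i : Fin n) :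
    i ∈ S ↔ n - S.card ≤ i.val := by
  constructor
  · intro hi
    have hsub : Finset.Ici i ⊆ S := fun j hj => h i j (Finset.mem_Ici.mp hj) hi
    have h1 := Finset.card_le_card hsub
    rw [Fin.card_Ici] at h1
    have := i.isLt; omega
  · intro hle
    by_contra hi
    have hsub : Finset.Iic i ⊆ Sᶜ := fun j hj => by
      simp only [Finset.mem_compl]
      exact fun hjS => hi (h j i (Finset.mem_Iic.mp hj) hjS)
    have h1 := Finset.card_le_card hsub
    rw [Fin.card_Iic, Finset.card_compl, Fintype.card_fin] at h1
    have h2 : S.card ≤ n := by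
      simpa using Finset.card_le_card (Finset.subset_univ S)
    have := i.isLt; omega

lemma strictAnti_eq_of_image_eq {n : ℕ} {f g : Fin n → ℤ} (hf : StrictAnti f) (hg : StrictAnti g)
    (h : Finset.univ.image f = Finset.univ.image g) : f = g := by
  have key : ∀ (f : Fin n → ℤ), StrictAnti f → ∀ i : Fin n,
      ((Finset.univ.image f).filter fun x => f i < x).card = i.val := by
    intro f hf i
    have h1 : (Finset.univ.filter fun k => f i < f k) = Finset.Iio i := by
      ext k
      simp [hf.lt_iff_gt]
    rw [Finset.filter_image, Finset.card_image_of_injective _ hf.injective, h1, Fin.card_Iio]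
  funext i
  have hmem : f i ∈ Finset.univ.image g := h ▸ Finset.mem_image_of_mem f (Finset.mem_univ i)
  obtain ⟨j, _, hj⟩ := Finset.mem_image.mp hmem
  have e1 := key f hf i
  have e2 := key g hg j
  rw [hj, ← h, e1] at e2
  have hij : i = j := Fin.ext e2
  rw [← hj, hij]

lemma le_last_any {n : ℕ} (hn : 0 < n) (ω : Fin n → ℤ) (hanti : Antitone ω) (i : Fin n) :
    ω ⟨n - 1, Nat.sub_lt hn one_pos⟩ ≤ ω i := by
  apply hanti
  have := i.isLt
  rw [Fin.le_def]
  simp only []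
  omega

lemma pq_facts {n : ℕ} (hn : 0 < n) (ω : Fin n → ℤ) (hanti : Antitone ω) :
    (∀ i : Fin n, ω i = ω ⟨n - 1, Nat.sub_lt hn one_pos⟩ ↔ n - pCount hn ω ≤ i.val) ∧
    (∀ i : Fin n, ω i ≤ ω ⟨n - 1, Nat.sub_lt hn one_pos⟩ + 1 ↔
      n - (pCount hn ω + qCount hn ω) ≤ i.val) ∧
    pCount hn ω + qCount hn ω ≤ n := by
  set last : Fin n := ⟨n - 1, Nat.sub_lt hn one_pos⟩ with hlastdef
  have hge : ∀ i, ω last ≤ ω i := le_last_any hn ω hanti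
  have hcard : (Finset.univ.filter fun i : Fin n => ω i ≤ ω last + 1).card
      = pCount hn ω + qCount hn ω := by
    rw [pCount, qCount]
    rw [← Finset.card_union_of_disjoint]
    · congr 1
      ext k
      rw [← hlastdef]
      simp only [Finset.mem_filter, Finset.mem_univ, true_and, Finset.mem_union]
      have := hge k
      omega
    · rw [Finset.disjoint_left]
      intro a ha hb
      rw [← hlastdef] at ha hb
      simp only [Finset.mem_filter, Finset.mem_univ, true_and] at ha hb
      omega
  refine ⟨?_, ?_, ?_⟩
  · intro i
    have := upclosed_mem_iff (Finset.univ.filter fun i : Fin n => ω i = ω last)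
      (fun i j hij hi => by
        simp only [Finset.mem_filter, Finset.mem_univ, true_and] at *
        have := hanti hij
        have := hge j
        omega) i
    simpa [pCount] using this
  · intro i
    have := upclosed_mem_iff (Finset.univ.filter fun i : Fin n => ω i ≤ ω last + 1)
      (fun i j hij hi => by
        simp only [Finset.mem_filter, Finset.mem_univ, true_and] at *
        have := hanti hij
        omega) i
    rw [hcard] at this
    simpa using this
  · rw [← hcard]
    simpa using Finset.card_filter_le Finset.univ (fun i : Fin n => ω i ≤ ω last + 1)

lemma abs_units_mul (ε : ℤˣ) (x : ℤ) (hx : 1 ≤ x) : |(ε:ℤ) * x| = x := by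
  rcases Int.units_eq_one_or ε with h | h <;>
    simp [h, abs_of_nonneg (by omega : (0:ℤ) ≤ x)]

lemma nu_formula {n : ℕ} (lam : Fin n → ℤ) (σ : Equiv.Perm (Fin n)) (ε : Fin n → ℤˣ)
    (i : Fin n) :
    dotAct σ ε lam i - ((i:ℤ)+1) = (ε i : ℤ) * (lam (σ.symm i) - (((σ.symm i) : ℤ) + 1)) := by
  simp [dotAct, signedPermAct, rhoC]; ring

/-- Main classification of dominant orbit elements satisfying the unitarity bound. -/
lemma main_mem {n : ℕ} (hn : 0 < n) (lam : Fin n → ℤ) (hanti : Antitone lam)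
    (hlast : (n : ℤ) ≤ lam ⟨n - 1, Nat.sub_lt hn one_pos⟩)
    (hreg : (∀ i j : Fin n, i ≠ j → |lam i - ((i : ℤ) + 1)| ≠ |lam j - ((j : ℤ) + 1)|) ∧
      ∀ i : Fin n, |lam i - ((i : ℤ) + 1)| ≠ 0)
    (ω : Fin n → ℤ)
    (horb : ∃ (σ : Equiv.Perm (Fin n)) (ε : Fin n → ℤˣ), ω = dotAct σ ε lam)
    (hωanti : Antitone ω)
    (hineq : 2 * ω ⟨n - 1, Nat.sub_lt hn one_pos⟩ ≥
        2 * (n : ℤ) - 2 * (pCount hn ω : ℤ) - (qCount hn ω : ℤ)) :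
    ω = lam ∨ (lam ⟨n - 1, Nat.sub_lt hn one_pos⟩ = (n:ℤ) + 1 ∧
      ∃ M : ℕ, 1 ≤ M ∧ M ≤ pCount hn lam ∧ ω = lamTrunc lam M) := by
  obtain ⟨σ, ε, hω⟩ := horb
  set last : Fin n := ⟨n - 1, Nat.sub_lt hn one_pos⟩ with hlastdef
  have hlastval : (last : ℕ) = n - 1 := rfl
  set mu : Fin n → ℤ := shiftW lam with hmudef
  set nu : Fin n → ℤ := shiftW ω with hnudef
  have hmu_apply : ∀ i, mu i = lam i - ((i:ℤ)+1) := fun i => rfl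
  have hnu_apply : ∀ i, nu i = ω i - ((i:ℤ)+1) := fun i => rfl
  have hmu_anti : StrictAnti mu := by
    intro i j hij
    have h1 := hanti hij.le
    have h2 : ((i:ℕ):ℤ) < ((j:ℕ):ℤ) := by exact_mod_cast (show (i:ℕ) < (j:ℕ) from hij)
    rw [hmu_apply, hmu_apply]
    omega
  have hmul : mu last = lam last - n := by
    rw [hmu_apply]
    have : ((last:ℕ):ℤ) = (n:ℤ) - 1 := by rw [hlastval]; omega
    omega
  have hmu_ge : ∀ i, mu last ≤ mu i := fun i => le_last_any hn mu hmu_anti.antitone i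
  have hmu1 : ∀ i, 1 ≤ mu i := by
    intro i
    have h0 := hmu_ge i
    have h := hreg.2 i
    rw [abs_ne_zero] at h
    have h1 : mu i ≠ 0 := h
    omega
  have hnu : ∀ i, nu i = (ε i : ℤ) * mu (σ.symm i) := by
    intro i
    rw [hnu_apply, hmu_apply, hω]
    exact nu_formula lam σ ε i
  have habs : ∀ i, |nu i| = mu (σ.symm i) := by
    intro i
    rw [hnu i]
    exact abs_units_mul _ _ (hmu1 _)
  have hnu_ne : ∀ i, nu i ≠ 0 := by
    intro i hc
    have h1 := habs i
    rw [hc] at h1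
    have h2 := hmu1 (σ.symm i)
    simp at h1
    omega
  have hnuanti : StrictAnti nu := by
    intro i j hij
    have h1 := hωanti hij.le
    have h2 : ((i:ℕ):ℤ) < ((j:ℕ):ℤ) := by exact_mod_cast (show (i:ℕ) < (j:ℕ) from hij)
    rw [hnu_apply, hnu_apply]
    omega
  have hωge : ∀ i, ω last ≤ ω i := le_last_any hn ω hωanti
  obtain ⟨F1, F2, Fpq⟩ := pq_facts hn ω hωanti
  rw [← hlastdef] at F1 F2
  set p := pCount hn ω with hpdef
  set q := qCount hn ω with hqdef
  have hmemtail : ∀ i : Fin n, n - p ≤ (i:ℕ) → nu i = ω last - ((i:ℕ):ℤ) - 1 := by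
    intro i hi
    have h1 := (F1 i).mpr hi
    rw [hnu_apply, h1]
    ring
  have hq2 : ∀ i : Fin n, (i:ℕ) < n - (p + q) → ω last + 2 ≤ ω i := by
    intro i hi
    have h2 := (F2 i).not.mpr (by omega)
    push_neg at h2
    omega
  have hnu_last : nu last = ω last - n := by
    rw [hnu_apply]
    have : ((last:ℕ):ℤ) = (n:ℤ) - 1 := by rw [hlastval]; omega
    omega
  by_cases hb : (n:ℤ) + 1 ≤ ω last
  · -- Case A : all entries of ν are positive, hence ω = λ
    left
    have hpos : ∀ i, 1 ≤ nu i := by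
      intro i
      have h1 := hωge i
      have h2 : ((i:ℕ):ℤ) ≤ (n:ℤ) - 1 := by
        have := i.isLt; omega
      rw [hnu_apply]
      omega
    have hnumu : ∀ i, nu i = mu (σ.symm i) := by
      intro i
      rw [← habs i, abs_of_pos (by linarith [hpos i])]
    have himg : Finset.univ.image nu = Finset.univ.image mu := by
      apply Finset.eq_of_subset_of_card_le
      · intro x hx
        obtain ⟨i, _, rfl⟩ := Finset.mem_image.mp hx
        rw [hnumu i]
        exact Finset.mem_image_of_mem _ (Finset.mem_univ _)
      · rw [Finset.card_image_of_injective _ hmu_anti.injective,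
          Finset.card_image_of_injective _ hnuanti.injective]
    have hfe := strictAnti_eq_of_image_eq hnuanti hmu_anti himg
    funext i
    have hh : nu i = mu i := congrFun hfe i
    rw [hnu_apply, hmu_apply] at hh
    omega
  · -- Case B : the smallest entry of ν is negative
    push_neg at hb
    have hbne : ω last - (n:ℤ) ≠ 0 := by rw [← hnu_last]; exact hnu_ne last
    obtain ⟨M, hM⟩ : ∃ M : ℕ, (M:ℤ) = (n:ℤ) - ω last :=
      ⟨((n:ℤ) - ω last).toNat, Int.toNat_of_nonneg (by omega)⟩
    have hM1 : 1 ≤ M := by omega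
    have hple : (p:ℤ) ≤ M := by
      by_contra hc
      push_neg at hc
      have hpn : p ≤ n := by omega
      have hMn : M ≤ n - 1 := by omega
      obtain ⟨i0, hv0⟩ : ∃ i : Fin n, (i:ℕ) = n - 1 - M := ⟨⟨n - 1 - M, by omega⟩, rfl⟩
      have ht0 := hmemtail i0 (by omega)
      rw [hv0] at ht0
      exact hnu_ne i0 (by omega)
    by_cases hq : q = 0
    · -- q = 0 : here ω = λ^{(M)} and λ_n = n+1
      right
      have hineq' : (M:ℤ) ≤ p := by omega
      have hpM : p = M := by omega
      have hMn : M ≤ n := by omega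
      obtain ⟨i1, hv1⟩ : ∃ i : Fin n, (i:ℕ) = n - M := ⟨⟨n - M, by omega⟩, rfl⟩
      have hne1 : nu i1 = -1 := by
        have ht1 := hmemtail i1 (by omega)
        rw [hv1] at ht1
        omega
      have hmu1' : mu (σ.symm i1) = 1 := by
        rw [← habs i1, hne1]
        rfl
      have hcase2 : lam last = (n:ℤ) + 1 := by
        have h1 := hmu_ge (σ.symm i1)
        rw [hmu1', hmul] at h1
        have h2 := hmu1 last
        rw [hmul] at h2
        omega
      -- facts about μ in the λ_n = n+1 case
      obtain ⟨F1l, _, _⟩ := pq_facts hn lam hanti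
      rw [← hlastdef] at F1l
      set p0 := pCount hn lam with hp0def
      have hmu_tail : ∀ i : Fin n, n - p0 ≤ (i:ℕ) → mu i = (n:ℤ) - ((i:ℕ):ℤ) := by
        intro i hi
        have h1 := (F1l i).mpr hi
        rw [hmu_apply, h1, hcase2]
        ring
      have hmu_head : ∀ i : Fin n, (i:ℕ) < n - p0 → (p0:ℤ) + 2 ≤ mu i := by
        intro i hi
        have h1 : lam i ≠ lam last := fun hc => by have := (F1l i).mp hc; omega
        have h2 := le_last_any hn lam hanti i
        rw [← hlastdef] at h2
        have h3 : lam last + 1 ≤ lam i := by omega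
        rw [hcase2] at h3
        rw [hmu_apply]
        have h4 : (i:ℕ) + p0 + 1 ≤ n := by omega
        have h5 : ((i:ℕ):ℤ) + p0 + 1 ≤ (n:ℤ) := by exact_mod_cast h4
        omega
      have hMp0 : M ≤ p0 := by
        by_contra hc
        push_neg at hc
        obtain ⟨i2, hv2⟩ : ∃ i : Fin n, (i:ℕ) = n - M + p0 := ⟨⟨n - M + p0, by omega⟩, rfl⟩
        have hnu2 : nu i2 = -((p0:ℤ) + 1) := by
          have ht2 := hmemtail i2 (by omega)
          rw [hv2] at ht2
          omega
        have hmu2 : mu (σ.symm i2) = (p0:ℤ) + 1 := by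
          rw [← habs i2, hnu2, abs_neg]
          exact abs_of_nonneg (by positivity)
        by_cases hj : n - p0 ≤ ((σ.symm i2 : Fin n):ℕ)
        · have h1 := hmu_tail (σ.symm i2) hj
          rw [hmu2] at h1
          have h2 := (σ.symm i2).isLt
          omega
        · have h1 := hmu_head (σ.symm i2) (by omega)
          rw [hmu2] at h1
          omega
      refine ⟨hcase2, M, hM1, hMp0, ?_⟩
      -- conclude ω = λ^{(M)} by comparing sorted shifted weights
      set nus : Fin n → ℤ := shiftW (lamTrunc lam M) with hnusdef
      have hnus_head : ∀ i : Fin n, (i:ℕ) < n - M → nus i = mu i := by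
        intro i hi
        rw [hnusdef, hmudef]
        simp only [shiftW, lamTrunc, if_pos hi]
      have hnus_tail : ∀ i : Fin n, n - M ≤ (i:ℕ) → nus i = (n:ℤ) - M - ((i:ℕ):ℤ) - 1 := by
        intro i hi
        rw [hnusdef]
        simp only [shiftW, lamTrunc, if_neg (by omega : ¬ (i:ℕ) < n - M)]
        ring
      have hnus_anti : StrictAnti nus := by
        intro i j hij
        have hij' : (i:ℕ) < (j:ℕ) := hij
        by_cases hi : (i:ℕ) < n - M
        · by_cases hj : (j:ℕ) < n - M
          · rw [hnus_head i hi, hnus_head j hj]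
            exact hmu_anti hij
          · rw [hnus_head i hi, hnus_tail j (by omega)]
            have h1 := hmu1 i
            have h2 : (n:ℤ) - M ≤ ((j:ℕ):ℤ) := by omega
            omega
        · rw [hnus_tail i (by omega), hnus_tail j (by omega)]
          have : ((i:ℕ):ℤ) < ((j:ℕ):ℤ) := by exact_mod_cast hij'
          omega
      have hhead : ∀ i : Fin n, (i:ℕ) < n - M → nu i = mu (σ.symm i) := by
        intro i hi
        have h2 := hq2 i (by omega)
        have h3 : ((i:ℕ):ℤ) ≤ (n:ℤ) - M - 1 := by omega
        have h4 : 1 ≤ nu i := by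
          rw [hnu_apply]
          omega
        rw [← habs i, abs_of_pos (by omega)]
      have hsub : ∀ i : Fin n, ∃ j : Fin n, nu i = nus j := by
        intro i
        by_cases hi : (i:ℕ) < n - M
        · have hni := hhead i hi
          by_cases hj : ((σ.symm i : Fin n):ℕ) < n - M
          · exact ⟨σ.symm i, by rw [hni, hnus_head _ hj]⟩
          · exfalso
            have hv1' : n - M ≤ ((σ.symm i : Fin n):ℕ) := by omega
            have hmuv := hmu_tail (σ.symm i) (by omega)
            have hvlt := (σ.symm i).isLt
            obtain ⟨i3, hv3⟩ : ∃ i' : Fin n, (i':ℕ) = 2*n - M - ((σ.symm i : Fin n):ℕ) - 1 :=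
              ⟨⟨2*n - M - ((σ.symm i : Fin n):ℕ) - 1, by omega⟩, rfl⟩
            have ht3 := hmemtail i3 (by omega)
            rw [hv3] at ht3
            have hmu3 : mu (σ.symm i3) = (n:ℤ) - ((σ.symm i : Fin n):ℕ) := by
              rw [← habs i3]
              have h6 : nu i3 = (((σ.symm i : Fin n):ℕ):ℤ) - n := by omega
              rw [h6, abs_of_nonpos (by omega)]
              ring
            have h7 : σ.symm i3 = σ.symm i := hmu_anti.injective (by rw [hmu3, hmuv])
            have h8 : i3 = i := σ.symm.injective h7
            have h9 : (i3:ℕ) = (i:ℕ) := by rw [h8]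
            omega
        · refine ⟨i, ?_⟩
          have h1 := hmemtail i (by omega)
          rw [hnus_tail i (by omega), h1]
          omega
      have himg : Finset.univ.image nu = Finset.univ.image nus := by
        apply Finset.eq_of_subset_of_card_le
        · intro x hx
          obtain ⟨i, _, rfl⟩ := Finset.mem_image.mp hx
          obtain ⟨j, hj⟩ := hsub i
          rw [hj]
          exact Finset.mem_image_of_mem _ (Finset.mem_univ _)
        · rw [Finset.card_image_of_injective _ hnus_anti.injective,
            Finset.card_image_of_injective _ hnuanti.injective]
      have hfe := strictAnti_eq_of_image_eq hnuanti hnus_anti himg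
      funext i
      have hh : nu i = nus i := congrFun hfe i
      rw [hnu_apply, hnusdef] at hh
      have : lamTrunc lam M i = shiftW (lamTrunc lam M) i + ((i:ℤ)+1) := by
        rw [shiftW_apply]; ring
      rw [this, ← hh]
      ring
    · -- q ≥ 1 : contradiction
      exfalso
      have hq1 : 1 ≤ q := by omega
      by_cases hpM : (p:ℤ) = M
      · have hMn : M ≤ n - 1 := by omega
        obtain ⟨i1, hv1⟩ : ∃ i : Fin n, (i:ℕ) = n - M := ⟨⟨n - M, by omega⟩, rfl⟩
        have hne1 : nu i1 = -1 := by
          have ht1 := hmemtail i1 (by omega)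
          rw [hv1] at ht1
          omega
        obtain ⟨i2, hv2⟩ : ∃ i : Fin n, (i:ℕ) = n - M - 1 := ⟨⟨n - M - 1, by omega⟩, rfl⟩
        have hω2 : ω i2 = ω last + 1 := by
          have h1 := (F2 i2).mpr (by omega)
          have h3 := (F1 i2).not.mpr (by omega)
          have h4 := hωge i2
          omega
        have hne2 : nu i2 = 1 := by
          rw [hnu_apply, hω2]
          have : ((i2:ℕ):ℤ) = (n:ℤ) - M - 1 := by omega
          omega
        have e1 : mu (σ.symm i1) = 1 := by rw [← habs i1, hne1]; rfl
        have e2 : mu (σ.symm i2) = 1 := by rw [← habs i2, hne2]; rfl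
        have h5 : σ.symm i1 = σ.symm i2 := hmu_anti.injective (by rw [e1, e2])
        have h6 : i1 = i2 := σ.symm.injective h5
        have h7 : (i1:ℕ) = (i2:ℕ) := by rw [h6]
        omega
      · have hplt : (p:ℤ) < M := by omega
        by_cases hpqM : (M:ℤ) ≤ (p:ℤ) + q
        · have hMn : M ≤ n := by omega
          obtain ⟨i3, hv3⟩ : ∃ i : Fin n, (i:ℕ) = n - M := ⟨⟨n - M, by omega⟩, rfl⟩
          have hω3 : ω i3 = ω last + 1 := by
            have h1 := (F2 i3).mpr (by omega)
            have h3 := (F1 i3).not.mpr (by omega)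
            have h4 := hωge i3
            omega
          have : nu i3 = 0 := by
            rw [hnu_apply, hω3]
            have : ((i3:ℕ):ℤ) = (n:ℤ) - M := by omega
            omega
          exact hnu_ne i3 this
        · push_neg at hpqM
          omega

lemma lamTrunc_zero {n : ℕ} (lam : Fin n → ℤ) : lamTrunc lam 0 = lam := by
  funext i
  simp [lamTrunc, i.isLt]

lemma dot_self {n : ℕ} (lam : Fin n → ℤ) : dotAct 1 (fun _ => 1) lam = lam := by
  funext i; simp [dotAct, signedPermAct, rhoC, Equiv.Perm.one_symm]

lemma pCount_le {n : ℕ} (hn : 0 < n) (lam : Fin n → ℤ) (hanti : Antitone lam) :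
    pCount hn lam ≤ n := by
  obtain ⟨_, _, h⟩ := pq_facts hn lam hanti
  omega

lemma trunc_orbit {n : ℕ} (hn : 0 < n) (lam : Fin n → ℤ) (hanti : Antitone lam)
    (hcase2 : lam ⟨n - 1, Nat.sub_lt hn one_pos⟩ = (n:ℤ) + 1)
    (j : ℕ) (hj : j ≤ pCount hn lam) :
    ∃ (σ : Equiv.Perm (Fin n)) (ε : Fin n → ℤˣ), lamTrunc lam j = dotAct σ ε lam := by
  obtain ⟨F1l, _, _⟩ := pq_facts hn lam hanti
  have hjn : j ≤ n := le_trans hj (pCount_le hn lam hanti)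
  set f : Fin n → Fin n := fun i =>
    if h : n - j ≤ (i:ℕ) then ⟨2*n - j - 1 - (i:ℕ), by have := i.isLt; omega⟩ else i
    with hfdef
  have hf_val : ∀ i : Fin n, n - j ≤ (i:ℕ) → (f i : ℕ) = 2*n - j - 1 - (i:ℕ) := by
    intro i hi
    rw [hfdef]
    simp only [dif_pos hi]
  have hf_id : ∀ i : Fin n, (i:ℕ) < n - j → f i = i := by
    intro i hi
    rw [hfdef]
    simp only [dif_neg (by omega : ¬ n - j ≤ (i:ℕ))]
  have hinv : Function.Involutive f := by
    intro i
    by_cases hi : n - j ≤ (i:ℕ)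
    · have h1 := hf_val i hi
      have h2 : n - j ≤ (f i : ℕ) := by have := i.isLt; omega
      have h3 := hf_val (f i) h2
      apply Fin.ext
      have := i.isLt
      omega
    · rw [hf_id i (by omega), hf_id i (by omega)]
  set σ : Equiv.Perm (Fin n) := Function.Involutive.toPerm f hinv with hσdef
  have hsymm : ∀ i, σ.symm i = f i := fun i => rfl
  set ε : Fin n → ℤˣ := fun i => if n - j ≤ (i:ℕ) then -1 else 1 with hεdef
  refine ⟨σ, ε, ?_⟩
  funext i
  have hdot := nu_formula lam σ ε i
  rw [hsymm i] at hdot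
  by_cases hi : n - j ≤ (i:ℕ)
  · have hεi : ((ε i : ℤˣ) : ℤ) = -1 := by rw [hεdef]; simp [hi]
    have hfi := hf_val i hi
    have hfin : n - pCount hn lam ≤ (f i : ℕ) := by have := i.isLt; omega
    have hlamfi : lam (f i) = (n:ℤ) + 1 := by
      have := (F1l (f i)).mpr hfin
      rw [this, hcase2]
    rw [hεi, hlamfi] at hdot
    have hc1 : ((f i : ℕ):ℤ) = 2*(n:ℤ) - j - 1 - ((i:ℕ):ℤ) := by
      have := i.isLt
      omega
    rw [hc1] at hdot
    show lamTrunc lam j i = dotAct σ ε lam i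
    rw [lamTrunc]
    simp only [if_neg (by omega : ¬ (i:ℕ) < n - j)]
    omega
  · have hεi : ((ε i : ℤˣ) : ℤ) = 1 := by rw [hεdef]; simp [hi]
    rw [hεi, hf_id i (by omega), one_mul] at hdot
    show lamTrunc lam j i = dotAct σ ε lam i
    rw [lamTrunc]
    simp only [if_pos (by omega : (i:ℕ) < n - j)]
    omega

lemma trunc_antitone {n : ℕ} (hn : 0 < n) (lam : Fin n → ℤ) (hanti : Antitone lam)
    (hcase2 : lam ⟨n - 1, Nat.sub_lt hn one_pos⟩ = (n:ℤ) + 1)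
    (j : ℕ) : Antitone (lamTrunc lam j) := by
  intro i k hik
  have hik' : (i:ℕ) ≤ (k:ℕ) := hik
  simp only [lamTrunc]
  by_cases hk : (k:ℕ) < n - j
  · rw [if_pos hk, if_pos (by omega : (i:ℕ) < n - j)]
    exact hanti hik
  · rw [if_neg hk]
    by_cases hi : (i:ℕ) < n - j
    · rw [if_pos hi]
      have h1 := le_last_any hn lam hanti i
      rw [hcase2] at h1
      have h2 : (j:ℤ) ≥ 0 := by positivity
      omega
    · rw [if_neg hi]

lemma trunc_ineq {n : ℕ} (hn : 0 < n) (lam : Fin n → ℤ) (hanti : Antitone lam)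
    (hcase2 : lam ⟨n - 1, Nat.sub_lt hn one_pos⟩ = (n:ℤ) + 1)
    (j : ℕ) (hj : j ≤ pCount hn lam) :
    2 * lamTrunc lam j ⟨n - 1, Nat.sub_lt hn one_pos⟩ ≥
      2 * (n : ℤ) - 2 * (pCount hn (lamTrunc lam j) : ℤ) - (qCount hn (lamTrunc lam j) : ℤ) := by
  rcases Nat.eq_zero_or_pos j with rfl | hj1
  · rw [lamTrunc_zero]
    omega
  · have hjn : j ≤ n := le_trans hj (pCount_le hn lam hanti)
    have hlastv : lamTrunc lam j ⟨n - 1, Nat.sub_lt hn one_pos⟩ = (n:ℤ) - j := by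
      rw [lamTrunc]
      simp only [if_neg (by simp only []; omega : ¬ ((⟨n - 1, Nat.sub_lt hn one_pos⟩ : Fin n):ℕ) < n - j)]
    have hpj : j ≤ pCount hn (lamTrunc lam j) := by
      rw [pCount]
      have hsub : Finset.Ici (⟨n - j, by omega⟩ : Fin n) ⊆
          Finset.univ.filter (fun i : Fin n => lamTrunc lam j i =
            lamTrunc lam j ⟨n - 1, Nat.sub_lt hn one_pos⟩) := by
        intro i hi
        rw [Finset.mem_Ici, Fin.le_def] at hi
        simp only [Finset.mem_filter, Finset.mem_univ, true_and]
        rw [hlastv, lamTrunc]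
        simp only [if_neg (by simp only [] at hi; omega : ¬ (i:ℕ) < n - j)]
      have hcard := Finset.card_le_card hsub
      rw [Fin.card_Ici] at hcard
      simp only [] at hcard
      omega
    have hpj' : (j:ℤ) ≤ (pCount hn (lamTrunc lam j) : ℤ) := by exact_mod_cast hpj
    rw [hlastv]
    omega

/-- For a regular anti-dominant integral weight `λ`, the set of dominant weights `ω` in
the dot-orbit of `λ` satisfying the unitarizability inequality `ωₙ ≥ n − p(ω) − q(ω)/2`
is `{λ}` if `λₙ > n+1`, and is exactly `{λ^{(0)}, …, λ^{(p(λ))}}` if `λₙ = n+1`. -/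
theorem unitarizable_dot_orbit {n : ℕ} (hn : 0 < n) (lam : Fin n → ℤ)
    (hanti : Antitone lam)
    (hlast : (n : ℤ) ≤ lam ⟨n - 1, Nat.sub_lt hn one_pos⟩)
    (hreg : (∀ i j : Fin n, i ≠ j → |lam i - ((i : ℤ) + 1)| ≠ |lam j - ((j : ℤ) + 1)|) ∧
      ∀ i : Fin n, |lam i - ((i : ℤ) + 1)| ≠ 0) :
    ((n : ℤ) + 1 < lam ⟨n - 1, Nat.sub_lt hn one_pos⟩ →
      {ω : Fin n → ℤ |
        (∃ (σ : Equiv.Perm (Fin n)) (ε : Fin n → ℤˣ), ω = dotAct σ ε lam) ∧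
          Antitone ω ∧
          2 * ω ⟨n - 1, Nat.sub_lt hn one_pos⟩ ≥
            2 * (n : ℤ) - 2 * (pCount hn ω : ℤ) - (qCount hn ω : ℤ)} = {lam}) ∧
    (lam ⟨n - 1, Nat.sub_lt hn one_pos⟩ = (n : ℤ) + 1 →
      {ω : Fin n → ℤ |
        (∃ (σ : Equiv.Perm (Fin n)) (ε : Fin n → ℤˣ), ω = dotAct σ ε lam) ∧
          Antitone ω ∧
          2 * ω ⟨n - 1, Nat.sub_lt hn one_pos⟩ ≥
            2 * (n : ℤ) - 2 * (pCount hn ω : ℤ) - (qCount hn ω : ℤ)} =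
        {ω : Fin n → ℤ | ∃ j ≤ pCount hn lam, ω = lamTrunc lam j}) := by
  constructor
  · intro hgt
    ext ω
    simp only [Set.mem_setOf_eq, Set.mem_singleton_iff]
    constructor
    · rintro ⟨horb, ha, hi⟩
      rcases main_mem hn lam hanti hlast hreg ω horb ha hi with h | ⟨h2, _⟩
      · exact h
      · exfalso; omega
    · intro h
      rw [h]
      refine ⟨⟨1, fun _ => 1, (dot_self lam).symm⟩, hanti, ?_⟩
      omega
  · intro heq
    ext ω
    simp only [Set.mem_setOf_eq]
    constructor
    · rintro ⟨horb, ha, hi⟩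
      rcases main_mem hn lam hanti hlast hreg ω horb ha hi with h | ⟨_, M, _, hM2, h3⟩
      · exact ⟨0, Nat.zero_le _, by rw [lamTrunc_zero]; exact h⟩
      · exact ⟨M, hM2, h3⟩
    · rintro ⟨j, hj, rfl⟩
      exact ⟨trunc_orbit hn lam hanti heq j hj, trunc_antitone hn lam hanti heq j,
        trunc_ineq hn lam hanti heq j hj⟩
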